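/- arXiv:1202.5012 — 3 statements merged into one kernel-verified Lean document; each statement's English description precedes it below -/
import Mathlib

section
/- Define P : ℕ → ℕ → Bool by P x 0 = true, P 0 y = true, and P (x+1) (y+1) = xor (P x (y+1)) (P (x+1) y) (each interior cell is the exclusive-or of the cell to its west and the cell to its south, with all cells on the two axes set to true). Then for all natural numbers x and y, P x y = true if and only if (x,y) ∈ S_△. (This is the correctness of the xor-rule pattern painted by the Sierpinski tile assembly constructions.) -/
/-- The `i`-th stage of the discrete Sierpinski triangle:
`S_0 = {(0,0)}`, `S_{i+1} = S_i ∪ (S_i + 2^i·V)` with `V = {(1,0),(0,1)}`. -/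
def sierpStage : ℕ → Set (ℕ × ℕ)
  | 0 => {(0, 0)}
  | i + 1 => sierpStage i ∪
      {p | ∃ m ∈ sierpStage i, ∃ n ∈ ({(1, 0), (0, 1)} : Set (ℕ × ℕ)), p = m + (2 ^ i) • n}

/-- The discrete Sierpinski triangle `S_△ = ⋃ i, S_i`. -/
def sierpinski : Set (ℕ × ℕ) := ⋃ i, sierpStage i

/-- The xor-rule pattern: `true` on both axes, and each interior cell is the
exclusive-or of the cell to its west and the cell to its south. -/
def xorPattern : ℕ → ℕ → Bool
  | _, 0 => true
  | 0, _ + 1 => true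
  | x + 1, y + 1 => xor (xorPattern x (y + 1)) (xorPattern (x + 1) y)

/-- Bit-disjointness: no position where both `x` and `y` have a 1 bit. -/
def BitDisj (x y : ℕ) : Prop := ∀ i, x / 2 ^ i % 2 = 0 ∨ y / 2 ^ i % 2 = 0

lemma div_pow_succ (x i : ℕ) : x / 2 ^ (i + 1) = (x / 2) / 2 ^ i := by
  rw [pow_succ', Nat.div_div_eq_div_mul]

lemma bitDisj_iff (x y : ℕ) :
    BitDisj x y ↔ (x % 2 = 0 ∨ y % 2 = 0) ∧ BitDisj (x / 2) (y / 2) := by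
  constructor
  · intro h
    refine ⟨by simpa using h 0, fun i => ?_⟩
    have := h (i + 1)
    rwa [div_pow_succ, div_pow_succ] at this
  · rintro ⟨h0, h⟩ i
    cases i with
    | zero => simpa using h0
    | succ i => rw [div_pow_succ, div_pow_succ]; exact h i

lemma choose_parity : ∀ n x y : ℕ, x + y = n →
    ((x + y).choose x % 2 = 1 ↔ BitDisj x y) := by
  intro n
  induction n using Nat.strong_induction_on with
  | _ n ih =>
    intro x y hn
    rcases Nat.eq_zero_or_pos n with h0 | hpos
    · have hx : x = 0 := by omega
      have hy : y = 0 := by omega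
      subst hx; subst hy
      simp [BitDisj, Nat.zero_div]
    have lucas := Choose.choose_modEq_choose_mod_mul_choose_div_nat
        (n := x + y) (k := x) (p := 2)
    unfold Nat.ModEq at lucas
    rcases Nat.mod_two_eq_zero_or_one x with hx | hx <;>
      rcases Nat.mod_two_eq_zero_or_one y with hy | hy
    · have hxy : (x + y) % 2 = 0 := by omega
      have hdiv : (x + y) / 2 = x / 2 + y / 2 := by omega
      rw [hxy, hx, hdiv] at lucas
      norm_num at lucas
      rw [lucas, ih ((x + y) / 2) (by omega) (x / 2) (y / 2) (by omega), bitDisj_iff x y]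
      exact ⟨fun h => ⟨by omega, h⟩, And.right⟩
    · have hxy : (x + y) % 2 = 1 := by omega
      have hdiv : (x + y) / 2 = x / 2 + y / 2 := by omega
      rw [hxy, hx, hdiv] at lucas
      norm_num at lucas
      rw [lucas, ih ((x + y) / 2) (by omega) (x / 2) (y / 2) (by omega), bitDisj_iff x y]
      exact ⟨fun h => ⟨by omega, h⟩, And.right⟩
    · have hxy : (x + y) % 2 = 1 := by omega
      have hdiv : (x + y) / 2 = x / 2 + y / 2 := by omega
      rw [hxy, hx, hdiv] at lucas
      norm_num at lucas
      rw [lucas, ih ((x + y) / 2) (by omega) (x / 2) (y / 2) (by omega), bitDisj_iff x y]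
      exact ⟨fun h => ⟨by omega, h⟩, And.right⟩
    · have hxy : (x + y) % 2 = 0 := by omega
      rw [hxy, hx] at lucas
      norm_num at lucas
      constructor
      · intro h; omega
      · intro h
        have := h 0
        simp at this
        omega

lemma parity_add_pow {i j x : ℕ} (hj : j < i) :
    (x + 2 ^ i) / 2 ^ j % 2 = x / 2 ^ j % 2 := by
  have hpow : 2 ^ i = 2 ^ j * (2 * 2 ^ (i - j - 1)) := by
    rw [← pow_succ']
    rw [← pow_add]
    congr 1
    omega
  rw [hpow, Nat.add_mul_div_left _ _ (Nat.two_pow_pos j)]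
  omega

lemma bitDisj_add_pow {i x y : ℕ} (hx : x < 2 ^ i) (hy : y < 2 ^ i) :
    BitDisj (x + 2 ^ i) y ↔ BitDisj x y := by
  constructor <;> intro h j
  · rcases lt_or_ge j i with hj | hj
    · rcases h j with h' | h'
      · left; rwa [parity_add_pow hj] at h'
      · right; exact h'
    · right
      rw [Nat.div_eq_of_lt (lt_of_lt_of_le hy (Nat.pow_le_pow_right (by norm_num) hj))]
  · rcases lt_or_ge j i with hj | hj
    · rcases h j with h' | h'
      · left; rwa [parity_add_pow hj]
      · right; exact h'
    · right
      rw [Nat.div_eq_of_lt (lt_of_lt_of_le hy (Nat.pow_le_pow_right (by norm_num) hj))]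

lemma bitDisj_comm {x y : ℕ} (h : BitDisj x y) : BitDisj y x := fun j => (h j).symm

lemma smul_one_zero (i : ℕ) : (2 ^ i : ℕ) • ((1 : ℕ), (0 : ℕ)) = (2 ^ i, 0) := by simp

lemma smul_zero_one (i : ℕ) : (2 ^ i : ℕ) • ((0 : ℕ), (1 : ℕ)) = (0, 2 ^ i) := by simp

lemma stage_iff : ∀ i x y : ℕ, (x, y) ∈ sierpStage i ↔
    (x < 2 ^ i ∧ y < 2 ^ i ∧ BitDisj x y) := by
  intro i
  induction i with
  | zero =>
    intro x y
    simp only [sierpStage, Set.mem_singleton_iff, Prod.mk.injEq, pow_zero, Nat.lt_one_iff]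
    constructor
    · rintro ⟨rfl, rfl⟩
      exact ⟨rfl, rfl, fun j => Or.inl (by simp [Nat.zero_div])⟩
    · rintro ⟨rfl, rfl, _⟩; exact ⟨rfl, rfl⟩
  | succ i IH =>
    intro x y
    have h2 : (2 : ℕ) ^ (i + 1) = 2 * 2 ^ i := by rw [pow_succ]; ring
    constructor
    · rintro (h | ⟨⟨a, b⟩, hm, nn, hn, heq⟩)
      · obtain ⟨h1, h2', h3⟩ := (IH x y).mp h
        exact ⟨by omega, by omega, h3⟩
      · obtain ⟨ha, hb, hd⟩ := (IH a b).mp hm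
        simp only [Set.mem_insert_iff, Set.mem_singleton_iff] at hn
        rcases hn with rfl | rfl
        · rw [smul_one_zero, Prod.mk_add_mk, add_zero, Prod.mk.injEq] at heq
          obtain ⟨rfl, rfl⟩ := heq
          exact ⟨by omega, by omega, (bitDisj_add_pow ha hb).mpr hd⟩
        · rw [smul_zero_one, Prod.mk_add_mk, add_zero, Prod.mk.injEq] at heq
          obtain ⟨rfl, rfl⟩ := heq
          refine ⟨by omega, by omega, ?_⟩
          exact bitDisj_comm ((bitDisj_add_pow hb ha).mpr (bitDisj_comm hd))
    · rintro ⟨hx, hy, hd⟩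
      have hkey : ¬(2 ^ i ≤ x ∧ 2 ^ i ≤ y) := by
        rintro ⟨h1', h2'⟩
        have dx : x / 2 ^ i = 1 := Nat.div_eq_of_lt_le (by omega) (by omega)
        have dy : y / 2 ^ i = 1 := Nat.div_eq_of_lt_le (by omega) (by omega)
        have := hd i
        rw [dx, dy] at this
        omega
      rcases lt_or_ge x (2 ^ i) with hx' | hx'
      · rcases lt_or_ge y (2 ^ i) with hy' | hy'
        · exact Or.inl ((IH x y).mpr ⟨hx', hy', hd⟩)
        · -- y ≥ 2^i, x < 2^i
          right
          have hb' : y - 2 ^ i < 2 ^ i := by omega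
          refine ⟨(x, y - 2 ^ i), ?_, (0, 1), by simp, ?_⟩
          · apply (IH x (y - 2 ^ i)).mpr
            refine ⟨hx', by omega, ?_⟩
            have hdy : BitDisj (y - 2 ^ i + 2 ^ i) x := by
              rw [show y - 2 ^ i + 2 ^ i = y by omega]
              exact bitDisj_comm hd
            exact bitDisj_comm ((bitDisj_add_pow hb' hx').mp hdy)
          · rw [smul_zero_one, Prod.mk_add_mk, add_zero, Prod.mk.injEq]
            exact ⟨rfl, by omega⟩
      · -- x ≥ 2^i, so y < 2^i
        have hy' : y < 2 ^ i := by
          by_contra h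
          exact hkey ⟨hx', by omega⟩
        right
        have ha' : x - 2 ^ i < 2 ^ i := by omega
        refine ⟨(x - 2 ^ i, y), ?_, (1, 0), by simp, ?_⟩
        · apply (IH (x - 2 ^ i) y).mpr
          refine ⟨by omega, hy', ?_⟩
          have hdx : BitDisj (x - 2 ^ i + 2 ^ i) y := by
            rw [show x - 2 ^ i + 2 ^ i = x by omega]
            exact hd
          exact (bitDisj_add_pow ha' hy').mp hdx
        · rw [smul_one_zero, Prod.mk_add_mk, add_zero, Prod.mk.injEq]
          exact ⟨by omega, rfl⟩

lemma xorPat_eq : ∀ x y : ℕ, xorPattern x y = decide ((x + y).choose x % 2 = 1) := by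
  intro x
  induction x with
  | zero =>
    intro y
    cases y with
    | zero => simp [xorPattern]
    | succ y => simp [xorPattern]
  | succ x IHx =>
    intro y
    induction y with
    | zero => simp [xorPattern]
    | succ y IHy =>
      have hchoose : (x + 1 + (y + 1)).choose (x + 1)
          = (x + (y + 1)).choose x + (x + 1 + y).choose (x + 1) := by
        have h := Nat.choose_succ_succ (x + y + 1) x
        rw [show x + 1 + (y + 1) = x + y + 1 + 1 by omega] at *
        rw [h, show x + (y + 1) = x + y + 1 by omega,
          show x + 1 + y = x + y + 1 by omega]
      have hdef : xorPattern (x + 1) (y + 1)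
          = xor (xorPattern x (y + 1)) (xorPattern (x + 1) y) := by
        simp [xorPattern]
      rw [hdef, IHx (y + 1), IHy, hchoose]
      rcases Nat.mod_two_eq_zero_or_one ((x + (y + 1)).choose x) with h1 | h1 <;>
        rcases Nat.mod_two_eq_zero_or_one ((x + 1 + y).choose (x + 1)) with h2 | h2 <;>
        simp [h1, h2, Nat.add_mod]

/-- Correctness of the xor-rule pattern painted by the Sierpinski tile
assembly constructions: `P x y = true` iff `(x,y) ∈ S_△`. -/
theorem xorPattern_iff_sierpinski (x y : ℕ) :
    xorPattern x y = true ↔ (x, y) ∈ sierpinski := by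
  rw [xorPat_eq, decide_eq_true_iff, choose_parity (x + y) x y rfl]
  constructor
  · intro h
    refine Set.mem_iUnion.mpr ⟨x + y, (stage_iff (x + y) x y).mpr ⟨?_, ?_, h⟩⟩
    · exact lt_of_le_of_lt (by omega) Nat.lt_two_pow_self
    · exact lt_of_le_of_lt (by omega) Nat.lt_two_pow_self
  · intro h
    obtain ⟨i, hi⟩ := Set.mem_iUnion.mp h
    exact ((stage_iff i x y).mp hi).2.2
end

section
/- For all natural numbers x and y, the point (x,y) belongs to the discrete Sierpinski triangle S_△ if and only if the binomial coefficient C(x+y, x) is odd. -/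
/-- disjoint binary digits -/
def BDisj (x y : ℕ) : Prop := ∀ j, ¬(x.testBit j = true ∧ y.testBit j = true)

lemma bdisj_div2 {x y : ℕ} (h : ¬(x % 2 = 1 ∧ y % 2 = 1)) :
    BDisj x y ↔ BDisj (x / 2) (y / 2) := by
  constructor
  · intro hd j
    rw [Nat.testBit_div_two, Nat.testBit_div_two]
    exact hd (j + 1)
  · intro hd j
    cases j with
    | zero => simp only [Nat.testBit_zero, decide_eq_true_eq]; exact h
    | succ j => rw [Nat.testBit_succ, Nat.testBit_succ]; exact hd j

lemma odd_choose_iff_bdisj_aux (n : ℕ) : ∀ x y : ℕ, x + y = n →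
    (Odd ((x + y).choose x) ↔ BDisj x y) := by
  induction n using Nat.strong_induction_on with
  | _ n IH =>
  intro x y hn
  have IH' : ∀ m, m < n → ∀ x y : ℕ, x + y = m → (Odd ((x + y).choose x) ↔ BDisj x y) := IH
  rcases Nat.eq_zero_or_pos (x + y) with h0 | hpos
  · have hx : x = 0 := by omega
    have hy : y = 0 := by omega
    subst hx; subst hy
    simp [BDisj]
  have key := Choose.choose_modEq_choose_mod_mul_choose_div_nat (p := 2) (n := x + y) (k := x)
  by_cases hb : x % 2 = 1 ∧ y % 2 = 1
  · have h1 : (x + y) % 2 = 0 := by omega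
    have h2 : x % 2 = 1 := hb.1
    rw [h1, h2] at key
    have : (x + y).choose x % 2 = 0 := by
      simpa [Nat.ModEq] using key
    constructor
    · intro hodd
      rw [Nat.odd_iff] at hodd; omega
    · intro hd
      exact absurd ⟨by simp [Nat.testBit_zero, hb.1], by simp [Nat.testBit_zero, hb.2]⟩ (hd 0)
  · have hdiv : (x + y) / 2 = x / 2 + y / 2 := by omega
    have hc : ((x + y) % 2).choose (x % 2) = 1 := by
      have hx2 := Nat.mod_two_eq_zero_or_one x
      have hy2 := Nat.mod_two_eq_zero_or_one y
      have hxy2 : (x + y) % 2 = (x % 2 + y % 2) % 2 := by omega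
      rcases hx2 with h | h <;> rcases hy2 with h' | h' <;>
        simp [h, h', hxy2] at hb ⊢
    rw [hc, one_mul, hdiv] at key
    have hlt : x / 2 + y / 2 < x + y := by omega
    have IH2 := IH' (x / 2 + y / 2) (by omega) (x / 2) (y / 2) rfl
    have heq : Odd ((x + y).choose x) ↔ Odd ((x / 2 + y / 2).choose (x / 2)) := by
      rw [Nat.odd_iff, Nat.odd_iff]
      unfold Nat.ModEq at key
      omega
    rw [heq, IH2, bdisj_div2 hb]

lemma odd_choose_iff_bdisj (x y : ℕ) : Odd ((x + y).choose x) ↔ BDisj x y :=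
  odd_choose_iff_bdisj_aux (x + y) x y rfl

lemma testBit_of_ge {i a : ℕ} (h1 : 2 ^ i ≤ a) (h2 : a < 2 ^ (i + 1)) : a.testBit i = true := by
  rw [Nat.testBit_eq_decide_div_mod_eq]
  have : a / 2 ^ i = 1 := by
    apply Nat.div_eq_of_lt_le (by omega)
    rw [pow_succ] at h2; omega
  simp [this]

lemma testBit_add_pow_lt {a j i : ℕ} (ha : a < 2 ^ i) (hj : j < i) :
    (a + 2 ^ i).testBit j = a.testBit j := by
  rw [Nat.add_comm, Nat.testBit_two_pow_add_gt hj]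

lemma mem_stage_iff (i x y : ℕ) :
    (x, y) ∈ sierpStage i ↔ BDisj x y ∧ x < 2 ^ i ∧ y < 2 ^ i := by
  induction i generalizing x y with
  | zero =>
    simp only [sierpStage, Set.mem_singleton_iff, Prod.mk.injEq, pow_zero]
    constructor
    · rintro ⟨rfl, rfl⟩; exact ⟨fun j => by simp, by omega, by omega⟩
    · rintro ⟨-, h1, h2⟩; omega
  | succ i IH =>
    constructor
    · rintro (h | ⟨m, hm, n, hn, hp⟩)
      · obtain ⟨hd, h1, h2⟩ := (IH x y).mp h
        have : (2:ℕ) ^ i < 2 ^ (i + 1) := by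
          have := Nat.one_le_two_pow (n := i); rw [pow_succ]; omega
        exact ⟨hd, by omega, by omega⟩
      · obtain ⟨hd, h1, h2⟩ := (IH m.1 m.2).mp hm
        rcases hn with rfl | rfl
        · have hx : x = m.1 + 2 ^ i := by
            have := congrArg Prod.fst hp; simpa using this
          have hy : y = m.2 := by
            have := congrArg Prod.snd hp; simpa using this
          subst hx; subst hy
          refine ⟨fun j hj => ?_, by rw [pow_succ]; omega, by
            have : (2:ℕ) ^ i < 2 ^ (i + 1) := by rw [pow_succ]; have := Nat.one_le_two_pow (n := i); omega
            omega⟩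
          rcases lt_trichotomy j i with h | rfl | h
          · rw [testBit_add_pow_lt h1 h] at hj; exact hd j hj
          · have : m.2.testBit j = false := Nat.testBit_lt_two_pow h2
            simp [this] at hj
          · have hlt : m.1 + 2 ^ i < 2 ^ j := by
              calc m.1 + 2 ^ i < 2 ^ (i + 1) := by rw [pow_succ]; omega
              _ ≤ 2 ^ j := Nat.pow_le_pow_right (by norm_num) h
            have : (m.1 + 2 ^ i).testBit j = false := Nat.testBit_lt_two_pow hlt
            simp [this] at hj
        · have hx : x = m.1 := by
            have := congrArg Prod.fst hp; simpa using this
          have hy : y = m.2 + 2 ^ i := by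
            have := congrArg Prod.snd hp; simpa using this
          subst hx; subst hy
          refine ⟨fun j hj => ?_, by
            have : (2:ℕ) ^ i < 2 ^ (i + 1) := by rw [pow_succ]; have := Nat.one_le_two_pow (n := i); omega
            omega, by rw [pow_succ]; omega⟩
          rcases lt_trichotomy j i with h | rfl | h
          · rw [testBit_add_pow_lt h2 h] at hj; exact hd j hj
          · have : m.1.testBit j = false := Nat.testBit_lt_two_pow h1
            simp [this] at hj
          · have hlt : m.2 + 2 ^ i < 2 ^ j := by
              calc m.2 + 2 ^ i < 2 ^ (i + 1) := by rw [pow_succ]; omega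
              _ ≤ 2 ^ j := Nat.pow_le_pow_right (by norm_num) h
            have : (m.2 + 2 ^ i).testBit j = false := Nat.testBit_lt_two_pow hlt
            simp [this] at hj
    · rintro ⟨hd, h1, h2⟩
      by_cases hs : x < 2 ^ i ∧ y < 2 ^ i
      · exact Or.inl ((IH x y).mpr ⟨hd, hs.1, hs.2⟩)
      · right
        have hnot : ¬(2 ^ i ≤ x ∧ 2 ^ i ≤ y) := by
          rintro ⟨ha, hb⟩
          exact hd i ⟨testBit_of_ge ha h1, testBit_of_ge hb h2⟩
        rcases Nat.lt_or_ge x (2 ^ i) with hx | hx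
        · -- y ≥ 2^i
          have hy : 2 ^ i ≤ y := by omega
          have hy' : y - 2 ^ i < 2 ^ i := by rw [pow_succ] at h2; omega
          refine ⟨(x, y - 2 ^ i), (IH _ _).mpr ⟨fun j hj => ?_, hx, hy'⟩, (0, 1), by simp,
            by simp [Prod.ext_iff]; omega⟩
          rcases Nat.lt_or_ge j i with h | h
          · have : (y - 2 ^ i + 2 ^ i).testBit j = (y - 2 ^ i).testBit j :=
              testBit_add_pow_lt hy' h
            rw [Nat.sub_add_cancel hy] at this
            exact hd j ⟨hj.1, by rw [this]; exact hj.2⟩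
          · have hlt : y - 2 ^ i < 2 ^ j := lt_of_lt_of_le hy' (Nat.pow_le_pow_right (by norm_num) h)
            have : (y - 2 ^ i).testBit j = false := Nat.testBit_lt_two_pow hlt
            simp [this] at hj
        · have hylt : y < 2 ^ i := by omega
          have hx' : x - 2 ^ i < 2 ^ i := by rw [pow_succ] at h1; omega
          refine ⟨(x - 2 ^ i, y), (IH _ _).mpr ⟨fun j hj => ?_, hx', hylt⟩, (1, 0), by simp,
            by simp [Prod.ext_iff]; omega⟩
          rcases Nat.lt_or_ge j i with h | h
          · have : (x - 2 ^ i + 2 ^ i).testBit j = (x - 2 ^ i).testBit j :=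
              testBit_add_pow_lt hx' h
            rw [Nat.sub_add_cancel hx] at this
            exact hd j ⟨by rw [this]; exact hj.1, hj.2⟩
          · have hlt : x - 2 ^ i < 2 ^ j := lt_of_lt_of_le hx' (Nat.pow_le_pow_right (by norm_num) h)
            have : (x - 2 ^ i).testBit j = false := Nat.testBit_lt_two_pow hlt
            simp [this] at hj

theorem sierpinski_iff_choose_odd' (x y : ℕ) :
    (x, y) ∈ sierpinski ↔ Odd ((x + y).choose x) := by
  rw [sierpinski, Set.mem_iUnion, odd_choose_iff_bdisj]
  constructor
  · rintro ⟨i, hi⟩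
    exact ((mem_stage_iff i x y).mp hi).1
  · intro hd
    refine ⟨x + y + 1, (mem_stage_iff _ x y).mpr ⟨hd, ?_, ?_⟩⟩
    · calc x ≤ x + y := by omega
        _ < 2 ^ (x + y) := Nat.lt_two_pow_self
        _ < 2 ^ (x + y + 1) := by rw [pow_succ]; have := Nat.one_le_two_pow (n := x + y); omega
    · calc y ≤ x + y := by omega
        _ < 2 ^ (x + y) := Nat.lt_two_pow_self
        _ < 2 ^ (x + y + 1) := by rw [pow_succ]; have := Nat.one_le_two_pow (n := x + y); omega


/-- A point `(x,y)` lies in the discrete Sierpinski triangle iff the binomial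
coefficient `C(x+y, x)` is odd. -/
theorem sierpinski_iff_choose_odd (x y : ℕ) :
    (x, y) ∈ sierpinski ↔ Odd ((x + y).choose x) := by
  exact sierpinski_iff_choose_odd' x y
end

section
/- The scale-factor-2 discrete Sierpinski triangle S_{2△} is 4-connected: for every point (u,v) ∈ S_{2△} there exists a finite sequence of points of S_{2△} starting at (0,0) and ending at (u,v) in which consecutive points differ by exactly 1 in exactly one coordinate. -/
/-- The 2×2 block of points corresponding to `(x,y)` at scale factor 2. -/
def block (p : ℕ × ℕ) : Set (ℕ × ℕ) :=
  {q | ∃ a ∈ ({0, 1} : Set ℕ), ∃ b ∈ ({0, 1} : Set ℕ), q = (2 * p.1 + a, 2 * p.2 + b)}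

/-- The Sierpinski triangle at scale factor 2. -/
def sierpinski2 : Set (ℕ × ℕ) := ⋃ p ∈ sierpinski, block p

/-- Two points of `ℕ × ℕ` are 4-adjacent if they differ by exactly `1` in
exactly one coordinate. -/
def FourAdj (p q : ℕ × ℕ) : Prop :=
  (p.1 = q.1 ∧ (p.2 + 1 = q.2 ∨ q.2 + 1 = p.2)) ∨
  (p.2 = q.2 ∧ (p.1 + 1 = q.1 ∨ q.1 + 1 = p.1))

def Conn (s : Set (ℕ × ℕ)) : ℕ × ℕ → ℕ × ℕ → Prop :=
  Relation.ReflTransGen (fun a b => a ∈ s ∧ b ∈ s ∧ FourAdj a b)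

lemma Conn.mono {s t : Set (ℕ × ℕ)} (hst : s ⊆ t) {a b} (h : Conn s a b) : Conn t a b :=
  Relation.ReflTransGen.mono (fun _ _ ⟨h1, h2, h3⟩ => ⟨hst h1, hst h2, h3⟩) _ _ h

lemma fourAdj_add {p q v : ℕ × ℕ} (h : FourAdj p q) : FourAdj (p + v) (q + v) := by
  obtain ⟨x, y⟩ := p; obtain ⟨x', y'⟩ := q; obtain ⟨a, b⟩ := v
  simp [FourAdj, Prod.ext_iff] at h ⊢; omega

lemma Conn.add {s : Set (ℕ × ℕ)} {a b : ℕ × ℕ} (v : ℕ × ℕ) (h : Conn s a b) :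
    Conn ((· + v) '' s) (a + v) (b + v) := by
  induction h with
  | refl => exact Relation.ReflTransGen.refl
  | tail _ h2 ih =>
    exact ih.tail ⟨⟨_, h2.1, rfl⟩, ⟨_, h2.2.1, rfl⟩, fourAdj_add h2.2.2⟩

lemma conn_list {s : Set (ℕ × ℕ)} {a b : ℕ × ℕ} (ha : a ∈ s) (h : Conn s a b) :
    ∃ l : List (ℕ × ℕ), l.head? = some a ∧ l.getLast? = some b ∧
      (∀ q ∈ l, q ∈ s) ∧ l.Chain' FourAdj := by
  induction h with
  | refl => exact ⟨[a], rfl, rfl, by simpa using ha, by simp [List.Chain']⟩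
  | @tail b c _ h2 ih =>
    obtain ⟨l, hh, hl, hm, hc⟩ := ih
    refine ⟨l ++ [c], ?_, ?_, ?_, ?_⟩
    · cases l with
      | nil => simp at hh
      | cons x xs => simpa using hh
    · simp
    · intro q hq
      rcases List.mem_append.1 hq with hq | hq
      · exact hm q hq
      · simp at hq; subst hq; exact h2.2.1
    · rw [List.Chain', List.isChain_append]
      refine ⟨hc, by simp, ?_⟩
      intro x hx y hy
      simp at hy; subst hy
      rw [hl] at hx; simp at hx; subst hx
      exact h2.2.2

lemma smul_e1 (k : ℕ) : k • ((1, 0) : ℕ × ℕ) = (k, 0) := by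
  simp [Prod.ext_iff]

lemma smul_e2 (k : ℕ) : k • ((0, 1) : ℕ × ℕ) = (0, k) := by
  simp [Prod.ext_iff]

lemma zero_mem_stage (i : ℕ) : ((0, 0) : ℕ × ℕ) ∈ sierpStage i := by
  induction i with
  | zero => simp [sierpStage]
  | succ i ih => exact Or.inl ih

lemma stage_subset (i : ℕ) : sierpStage i ⊆ sierpStage (i + 1) := fun _ h => Or.inl h

lemma row_mem_stage (i : ℕ) : ∀ x < 2 ^ i, ((x, 0) : ℕ × ℕ) ∈ sierpStage i := by
  induction i with
  | zero => intro x hx; interval_cases x; simp [sierpStage]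
  | succ i ih =>
    intro x hx
    by_cases h : x < 2 ^ i
    · exact stage_subset i (ih x h)
    · refine Or.inr ⟨(x - 2 ^ i, 0), ih _ (by simp [pow_succ] at hx; omega), (1, 0), by simp, ?_⟩
      simp [smul_e1, Prod.ext_iff]; omega

lemma col_mem_stage (i : ℕ) : ∀ y < 2 ^ i, ((0, y) : ℕ × ℕ) ∈ sierpStage i := by
  induction i with
  | zero => intro y hy; interval_cases y; simp [sierpStage]
  | succ i ih =>
    intro y hy
    by_cases h : y < 2 ^ i
    · exact stage_subset i (ih y h)
    · refine Or.inr ⟨(0, y - 2 ^ i), ih _ (by simp [pow_succ] at hy; omega), (0, 1), by simp, ?_⟩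
      simp [smul_e2, Prod.ext_iff]; omega

lemma conn_row {s : Set (ℕ × ℕ)} (x : ℕ) (h : ∀ t ≤ x, ((t, 0) : ℕ × ℕ) ∈ s) :
    Conn s (0, 0) (x, 0) := by
  induction x with
  | zero => exact Relation.ReflTransGen.refl
  | succ x ih =>
    exact (ih fun t ht => h t (by omega)).tail
      ⟨h x (by omega), h (x + 1) le_rfl, Or.inr ⟨rfl, Or.inl rfl⟩⟩

lemma conn_col {s : Set (ℕ × ℕ)} (y : ℕ) (h : ∀ t ≤ y, ((0, t) : ℕ × ℕ) ∈ s) :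
    Conn s (0, 0) (0, y) := by
  induction y with
  | zero => exact Relation.ReflTransGen.refl
  | succ y ih =>
    exact (ih fun t ht => h t (by omega)).tail
      ⟨h y (by omega), h (y + 1) le_rfl, Or.inl ⟨rfl, Or.inl rfl⟩⟩

lemma stage_conn (i : ℕ) : ∀ p ∈ sierpStage i, Conn (sierpStage i) (0, 0) p := by
  induction i with
  | zero => intro p hp; simp [sierpStage] at hp; subst hp; exact Relation.ReflTransGen.refl
  | succ i ih =>
    intro p hp
    rcases hp with hp | ⟨m, hm, n, hn, rfl⟩
    · exact (ih p hp).mono (stage_subset i)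
    obtain ⟨k, hk⟩ : ∃ k, 2 ^ i = k + 1 := ⟨2 ^ i - 1, by have := Nat.one_le_two_pow (n := i); omega⟩
    rcases hn with rfl | rfl
    · -- shift right by (2^i, 0)
      have himg : ((· + ((2 ^ i, 0) : ℕ × ℕ)) '' sierpStage i) ⊆ sierpStage (i + 1) := by
        rintro _ ⟨q, hq, rfl⟩
        exact Or.inr ⟨q, hq, (1, 0), by simp, by rw [smul_e1]⟩
      have h1 : Conn (sierpStage (i + 1)) (0, 0) (k, 0) :=
        conn_row k fun t ht => stage_subset i (row_mem_stage i t (by omega))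
      have h2 : Conn (sierpStage (i + 1)) (0, 0) (2 ^ i, 0) :=
        h1.tail ⟨stage_subset i (row_mem_stage i k (by omega)),
          himg ⟨(0, 0), zero_mem_stage i, by simp⟩,
          Or.inr ⟨rfl, Or.inl (by omega)⟩⟩
      have h3 : Conn (sierpStage (i + 1)) ((0, 0) + (2 ^ i, 0)) (m + (2 ^ i, 0)) :=
        ((ih m hm).add _).mono himg
      rw [smul_e1]
      simpa [Conn] using h2.trans (by simpa [Conn] using h3)
    · have himg : ((· + ((0, 2 ^ i) : ℕ × ℕ)) '' sierpStage i) ⊆ sierpStage (i + 1) := by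
        rintro _ ⟨q, hq, rfl⟩
        exact Or.inr ⟨q, hq, (0, 1), by simp, by rw [smul_e2]⟩
      have h1 : Conn (sierpStage (i + 1)) (0, 0) (0, k) :=
        conn_col k fun t ht => stage_subset i (col_mem_stage i t (by omega))
      have h2 : Conn (sierpStage (i + 1)) (0, 0) (0, 2 ^ i) :=
        h1.tail ⟨stage_subset i (col_mem_stage i k (by omega)),
          himg ⟨(0, 0), zero_mem_stage i, by simp⟩,
          Or.inl ⟨rfl, Or.inl (by omega)⟩⟩
      have h3 : Conn (sierpStage (i + 1)) ((0, 0) + (0, 2 ^ i)) (m + (0, 2 ^ i)) :=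
        ((ih m hm).add _).mono himg
      rw [smul_e2]
      simpa [Conn] using h2.trans (by simpa [Conn] using h3)

lemma mem2 {x y : ℕ} (h : ((x, y) : ℕ × ℕ) ∈ sierpinski) {a b : ℕ} (ha : a ≤ 1) (hb : b ≤ 1) :
    ((2 * x + a, 2 * y + b) : ℕ × ℕ) ∈ sierpinski2 := by
  refine Set.mem_biUnion h ⟨a, ?_, b, ?_, rfl⟩ <;> simp <;> omega

lemma lift_conn {q : ℕ × ℕ} (h : Conn sierpinski (0, 0) q) :
    Conn sierpinski2 (0, 0) (2 * q.1, 2 * q.2) := by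
  induction h with
  | refl => exact Relation.ReflTransGen.refl
  | @tail b c _ h2 ih =>
    obtain ⟨hb, hc, hadj⟩ := h2
    obtain ⟨x, y⟩ := b; obtain ⟨x', y'⟩ := c
    simp only at ih ⊢
    have m00b : ((2 * x, 2 * y) : ℕ × ℕ) ∈ sierpinski2 := by
      simpa using mem2 hb (Nat.zero_le 1) (Nat.zero_le 1)
    have m00c : ((2 * x', 2 * y') : ℕ × ℕ) ∈ sierpinski2 := by
      simpa using mem2 hc (Nat.zero_le 1) (Nat.zero_le 1)
    simp only [FourAdj] at hadj
    rcases hadj with ⟨h1, h2 | h2⟩ | ⟨h1, h2 | h2⟩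
    · have mid : ((2 * x, 2 * y + 1) : ℕ × ℕ) ∈ sierpinski2 := by
        simpa using mem2 hb (Nat.zero_le 1) (le_refl 1)
      exact (ih.tail ⟨m00b, mid, by simp [FourAdj]⟩).tail
        ⟨mid, m00c, by simp only [FourAdj]; omega⟩
    · have mid : ((2 * x', 2 * y' + 1) : ℕ × ℕ) ∈ sierpinski2 := by
        simpa using mem2 hc (Nat.zero_le 1) (le_refl 1)
      exact (ih.tail ⟨m00b, mid, by simp only [FourAdj]; omega⟩).tail
        ⟨mid, m00c, by simp [FourAdj]⟩
    · have mid : ((2 * x + 1, 2 * y) : ℕ × ℕ) ∈ sierpinski2 := by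
        simpa using mem2 hb (le_refl 1) (Nat.zero_le 1)
      exact (ih.tail ⟨m00b, mid, by simp [FourAdj]⟩).tail
        ⟨mid, m00c, by simp only [FourAdj]; omega⟩
    · have mid : ((2 * x' + 1, 2 * y') : ℕ × ℕ) ∈ sierpinski2 := by
        simpa using mem2 hc (le_refl 1) (Nat.zero_le 1)
      exact (ih.tail ⟨m00b, mid, by simp only [FourAdj]; omega⟩).tail
        ⟨mid, m00c, by simp [FourAdj]⟩


/-- The scale-factor-2 discrete Sierpinski triangle is 4-connected: every
point of `S_{2△}` is joined to `(0,0)` by a finite path of 4-adjacent points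
of `S_{2△}`. -/
theorem sierpinski2_fourConnected (p : ℕ × ℕ) (hp : p ∈ sierpinski2) :
    ∃ l : List (ℕ × ℕ), l.head? = some (0, 0) ∧ l.getLast? = some p ∧
      (∀ q ∈ l, q ∈ sierpinski2) ∧ l.Chain' FourAdj := by
  have h00 : ((0, 0) : ℕ × ℕ) ∈ sierpinski2 := by
    have h0 : ((0, 0) : ℕ × ℕ) ∈ sierpinski := Set.mem_iUnion.2 ⟨0, zero_mem_stage 0⟩
    simpa using mem2 h0 (Nat.zero_le 1) (Nat.zero_le 1)
  refine conn_list h00 ?_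
  simp only [sierpinski2, Set.mem_iUnion] at hp
  obtain ⟨q, hq, hpb⟩ := hp
  obtain ⟨a, ha, b, hb, rfl⟩ := hpb
  have hqc : Conn sierpinski (0, 0) q := by
    obtain ⟨i, hi⟩ := Set.mem_iUnion.1 hq
    exact (stage_conn i q hi).mono (Set.subset_iUnion sierpStage i)
  have base := lift_conn hqc
  have m00 : ((2 * q.1, 2 * q.2) : ℕ × ℕ) ∈ sierpinski2 := by
    simpa using mem2 hq (Nat.zero_le 1) (Nat.zero_le 1)
  have m10 : ((2 * q.1 + 1, 2 * q.2) : ℕ × ℕ) ∈ sierpinski2 := by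
    simpa using mem2 hq (le_refl 1) (Nat.zero_le 1)
  have m01 : ((2 * q.1, 2 * q.2 + 1) : ℕ × ℕ) ∈ sierpinski2 := by
    simpa using mem2 hq (Nat.zero_le 1) (le_refl 1)
  have m11 : ((2 * q.1 + 1, 2 * q.2 + 1) : ℕ × ℕ) ∈ sierpinski2 :=
    mem2 hq (le_refl 1) (le_refl 1)
  rcases ha with rfl | rfl <;> rcases hb with rfl | rfl
  · simpa using base
  · simpa [Conn] using base.tail ⟨m00, m01, by simp [FourAdj]⟩
  · simpa [Conn] using base.tail ⟨m00, m10, by simp [FourAdj]⟩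
  · exact (base.tail ⟨m00, m10, by simp [FourAdj]⟩).tail ⟨m10, m11, by simp [FourAdj]⟩
end
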